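/- Suppose 𝒜 ∩ ℬ = ∅ and let (u_𝒜, u_ℬ) be a best approximation pair for 𝒜 and ℬ. Then there exist real numbers c₁, c₂, not both zero, such that u_𝒜(t) − u_ℬ(t) = c₁·t + c₂ for a.e. t ∈ [0,1]; moreover u_ℬ(t) = a for a.e. t ∈ [0,1] with c₁·t + c₂ > 0, and u_ℬ(t) = −a for a.e. t ∈ [0,1] with c₁·t + c₂ < 0. In other words, the optimal gap function is affine and the best approximation control in ℬ is of bang–bang type with at most one switching. -/

import Mathlib

open MeasureTheory

/-- The measure on ℝ representing integration over the interval [0,1]. -/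
noncomputable def mu01 : Measure ℝ := volume.restrict (Set.Icc 0 1)

/-- The affine set 𝒜 of controls in L²([0,1],ℝ) steering the double integrator
from (s₀, v₀) to (s_f, v_f). -/
def setA (s0 sf v0 vf : ℝ) : Set (Lp ℝ 2 mu01) :=
  {u | (∫ t, u t ∂mu01) = vf - v0 ∧ (∫ t, (1 - t) * u t ∂mu01) = sf - s0 - v0}

/-- The box ℬ of controls bounded in absolute value by `a` a.e. on [0,1]. -/
def setB (a : ℝ) : Set (Lp ℝ 2 mu01) :=
  {u | ∀ᵐ t ∂mu01, |u t| ≤ a}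

lemma aux_var {F : Type*} [NormedAddCommGroup F] [InnerProductSpace ℝ F] (g w : F)
    (h : ∀ c : ℝ, ‖g‖ ≤ ‖g + c • w‖) : (inner ℝ g w : ℝ) = 0 := by
  have key : ∀ c : ℝ, 0 ≤ 2 * (c * (inner ℝ g w : ℝ)) + c ^ 2 * ‖w‖ ^ 2 := by
    intro c
    have h1 : ‖g‖ ^ 2 ≤ ‖g + c • w‖ ^ 2 := pow_le_pow_left₀ (norm_nonneg _) (h c) 2
    rw [norm_add_sq_real, inner_smul_right, norm_smul, mul_pow, Real.norm_eq_abs, sq_abs] at h1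
    linarith
  by_cases hw : ‖w‖ = 0
  · have k1 := key 1
    have k2 := key (-1)
    rw [hw] at k1 k2
    nlinarith
  · have hw2 : 0 < ‖w‖ ^ 2 := by positivity
    have hk := key (-(inner ℝ g w : ℝ) / ‖w‖ ^ 2)
    have h2 : (-(inner ℝ g w : ℝ) / ‖w‖ ^ 2) * ‖w‖ ^ 2 = -(inner ℝ g w : ℝ) :=
      div_mul_cancel₀ _ (ne_of_gt hw2)
    nlinarith [sq_nonneg (inner ℝ g w : ℝ)]

lemma clamp_le {a x y : ℝ} (hy : |y| ≤ a) :
    (x - max (-a) (min a x))^2 ≤ (x - y)^2 := by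
  rw [abs_le] at hy
  have haa : -a ≤ a := le_trans hy.1 hy.2
  rcases le_total x (-a) with h1 | h1
  · rw [min_eq_right (le_trans h1 haa), max_eq_left h1]
    nlinarith
  · rcases le_total x a with h2 | h2
    · rw [min_eq_right h2, max_eq_right h1]
      nlinarith [sq_nonneg (x - y)]
    · rw [min_eq_left h2, max_eq_right haa]
      nlinarith

lemma clamp_eq {a x y : ℝ} (hy : |y| ≤ a)
    (heq : (x - y)^2 = (x - max (-a) (min a x))^2) : y = max (-a) (min a x) := by
  rw [abs_le] at hy
  have haa : -a ≤ a := le_trans hy.1 hy.2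
  rcases le_total x (-a) with h1 | h1
  · rw [min_eq_right (le_trans h1 haa), max_eq_left h1] at *
    nlinarith
  · rcases le_total x a with h2 | h2
    · rw [min_eq_right h2, max_eq_right h1] at *
      nlinarith
    · rw [min_eq_left h2, max_eq_right haa] at *
      nlinarith

lemma clamp_pos {a x : ℝ} (ha : 0 ≤ a) (h : 0 < x - max (-a) (min a x)) :
    max (-a) (min a x) = a := by
  have haa : -a ≤ a := by linarith
  rcases le_total x a with h2 | h2
  · exfalso
    rcases le_total x (-a) with h1 | h1
    · rw [min_eq_right h2, max_eq_left h1] at h; linarith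
    · rw [min_eq_right h2, max_eq_right h1] at h; linarith
  · rw [min_eq_left h2, max_eq_right haa]

lemma clamp_neg {a x : ℝ} (ha : 0 ≤ a) (h : x - max (-a) (min a x) < 0) :
    max (-a) (min a x) = -a := by
  have haa : -a ≤ a := by linarith
  rcases le_total x (-a) with h1 | h1
  · rw [min_eq_right (le_trans h1 haa), max_eq_left h1]
  · exfalso
    rcases le_total x a with h2 | h2
    · rw [min_eq_right h2, max_eq_right h1] at h; linarith
    · rw [min_eq_left h2, max_eq_right haa] at h; linarith

instance : IsFiniteMeasure mu01 := by unfold mu01; infer_instance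

lemma mu01_mem_Icc : ∀ᵐ t ∂mu01, t ∈ Set.Icc (0:ℝ) 1 :=
  ae_restrict_mem measurableSet_Icc

lemma mem2_phi1 : MemLp (fun _ : ℝ => (1:ℝ)) 2 mu01 := memLp_const 1

lemma mem2_phi2 : MemLp (fun t : ℝ => 1 - t) 2 mu01 := by
  refine MemLp.of_bound ((continuous_const.sub continuous_id).aestronglyMeasurable) 1 ?_
  filter_upwards [mu01_mem_Icc] with t ht
  rw [Real.norm_eq_abs, abs_le]
  constructor <;> [linarith [ht.2]; linarith [ht.1]]

noncomputable def phi1 : Lp ℝ 2 mu01 := mem2_phi1.toLp _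
noncomputable def phi2 : Lp ℝ 2 mu01 := mem2_phi2.toLp _

lemma phi1_coe : ⇑phi1 =ᶠ[ae mu01] fun _ => (1:ℝ) := mem2_phi1.coeFn_toLp
lemma phi2_coe : ⇑phi2 =ᶠ[ae mu01] fun t => 1 - t := mem2_phi2.coeFn_toLp

lemma inner_phi1 (w : Lp ℝ 2 mu01) : (inner ℝ phi1 w : ℝ) = ∫ t, w t ∂mu01 := by
  rw [L2.inner_def]
  refine integral_congr_ae ?_
  filter_upwards [phi1_coe] with t ht
  rw [ht]
  simp [RCLike.inner_apply]

lemma inner_phi2 (w : Lp ℝ 2 mu01) : (inner ℝ phi2 w : ℝ) = ∫ t, (1 - t) * w t ∂mu01 := by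
  rw [L2.inner_def]
  refine integral_congr_ae ?_
  filter_upwards [phi2_coe] with t ht
  rw [ht]
  simp [RCLike.inner_apply, mul_comm]

theorem stmt_3 (s0 sf v0 vf a : ℝ) (ha : 0 < a)
    (hdisj : setA s0 sf v0 vf ∩ setB a = ∅)
    (uA uB : Lp ℝ 2 mu01)
    (huA : uA ∈ setA s0 sf v0 vf) (huB : uB ∈ setB a)
    (hbest : ∀ x ∈ setA s0 sf v0 vf, ∀ y ∈ setB a, ‖uA - uB‖ ≤ ‖x - y‖) :
    ∃ c1 c2 : ℝ, (c1 ≠ 0 ∨ c2 ≠ 0) ∧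
      (∀ᵐ t ∂mu01, uA t - uB t = c1 * t + c2) ∧
      (∀ᵐ t ∂mu01, 0 < c1 * t + c2 → uB t = a) ∧
      (∀ᵐ t ∂mu01, c1 * t + c2 < 0 → uB t = -a) := by
  classical
  -- membership in setA via inner products
  have hmemA : ∀ x : Lp ℝ 2 mu01, x ∈ setA s0 sf v0 vf ↔
      ((inner ℝ phi1 x : ℝ) = vf - v0 ∧ (inner ℝ phi2 x : ℝ) = sf - s0 - v0) := by
    intro x
    rw [setA, Set.mem_setOf_eq, inner_phi1, inner_phi2]
  haveI : FiniteDimensional ℝ (Submodule.span ℝ ({phi1, phi2} : Set (Lp ℝ 2 mu01))) :=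
    FiniteDimensional.span_of_finite ℝ (Set.toFinite _)
  -- orthogonality of the gap to the direction space
  have horth : ∀ w ∈ (Submodule.span ℝ ({phi1, phi2} : Set (Lp ℝ 2 mu01)))ᗮ,
      (inner ℝ (uA - uB) w : ℝ) = 0 := by
    intro w hw
    have hw1 : (inner ℝ phi1 w : ℝ) =
        0 := (Submodule.mem_orthogonal _ w).mp hw phi1
      (Submodule.subset_span (Set.mem_insert _ _))
    have hw2 : (inner ℝ phi2 w : ℝ) = 0 := (Submodule.mem_orthogonal _ w).mp hw phi2
      (Submodule.subset_span (Set.mem_insert_of_mem _ rfl))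
    apply aux_var
    intro c
    have hx : uA + c • w ∈ setA s0 sf v0 vf := by
      rw [hmemA]
      obtain ⟨hA1, hA2⟩ := (hmemA uA).mp huA
      constructor
      · rw [inner_add_right, inner_smul_right, hw1, hA1]; ring
      · rw [inner_add_right, inner_smul_right, hw2, hA2]; ring
    have hle := hbest _ hx uB huB
    rwa [add_sub_right_comm] at hle
  have hg : uA - uB ∈ Submodule.span ℝ ({phi1, phi2} : Set (Lp ℝ 2 mu01)) := by
    rw [← Submodule.orthogonal_orthogonal (Submodule.span ℝ ({phi1, phi2} : Set (Lp ℝ 2 mu01)))]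
    rw [Submodule.mem_orthogonal]
    intro w hw
    rw [real_inner_comm]
    exact horth w hw
  obtain ⟨c, d, hcd⟩ := Submodule.mem_span_pair.mp hg
  -- affine a.e. representation
  have hgfun : ∀ᵐ t ∂mu01, uA t - uB t = (-d) * t + (c + d) := by
    have e0 : ⇑(c • phi1 + d • phi2) =ᶠ[ae mu01] ⇑(uA - uB) := by rw [hcd]
    filter_upwards [e0, Lp.coeFn_add (c • phi1) (d • phi2), Lp.coeFn_smul c phi1,
      Lp.coeFn_smul d phi2, Lp.coeFn_sub uA uB, phi1_coe, phi2_coe]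
      with t h0 h1 h2 h3 h4 h5 h6
    simp only [Pi.add_apply, Pi.smul_apply, smul_eq_mul, Pi.sub_apply] at h1 h2 h3 h4
    rw [h1, h2, h3, h5, h6, h4] at h0
    linarith [h0]
  -- bang-bang part : uB coincides a.e. with the clamp of uA
  have huB' : ∀ᵐ t ∂mu01, |uB t| ≤ a := huB
  have hpm : MemLp (fun t => max (-a) (min a (uA t))) 2 mu01 := by
    refine MemLp.of_bound ?_ a ?_
    · exact (continuous_const.max (continuous_const.min continuous_id)).comp_aestronglyMeasurable
        (Lp.aestronglyMeasurable uA)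
    · refine Filter.Eventually.of_forall fun t => ?_
      rw [Real.norm_eq_abs, abs_le]
      exact ⟨le_max_left _ _, max_le (by linarith) (min_le_left _ _)⟩
  have hPc : ⇑(hpm.toLp _) =ᶠ[ae mu01] fun t => max (-a) (min a (uA t)) := hpm.coeFn_toLp
  have hPB : hpm.toLp _ ∈ setB a := by
    rw [setB, Set.mem_setOf_eq]
    filter_upwards [hPc] with t ht
    rw [ht]
    exact abs_le.mpr ⟨le_max_left _ _, max_le (by linarith) (min_le_left _ _)⟩
  have hn2 : ‖uA - uB‖ ^ 2 ≤ ‖uA - hpm.toLp _‖ ^ 2 :=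
    pow_le_pow_left₀ (norm_nonneg _) (hbest uA huA _ hPB) 2
  have hif1 : Integrable (fun t => (uA t - uB t) ^ 2) mu01 := by
    refine (L2.integrable_inner (𝕜 := ℝ) (uA - uB) (uA - uB)).congr ?_
    filter_upwards [Lp.coeFn_sub uA uB] with t ht
    simp only [RCLike.inner_apply, conj_trivial]
    rw [ht]
    simp only [Pi.sub_apply]
    ring
  have hif2 : Integrable (fun t => (uA t - max (-a) (min a (uA t))) ^ 2) mu01 := by
    refine (L2.integrable_inner (𝕜 := ℝ) (uA - hpm.toLp _) (uA - hpm.toLp _)).congr ?_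
    filter_upwards [Lp.coeFn_sub uA (hpm.toLp _), hPc] with t ht hp
    simp only [RCLike.inner_apply, conj_trivial]
    rw [ht]
    simp only [Pi.sub_apply]
    rw [hp]
    ring
  have hi1 : ‖uA - uB‖ ^ 2 = ∫ t, (uA t - uB t) ^ 2 ∂mu01 := by
    rw [← real_inner_self_eq_norm_sq, L2.inner_def]
    refine integral_congr_ae ?_
    filter_upwards [Lp.coeFn_sub uA uB] with t ht
    rw [ht]
    simp only [RCLike.inner_apply, conj_trivial, Pi.sub_apply]
    ring
  have hi2 : ‖uA - hpm.toLp _‖ ^ 2 = ∫ t, (uA t - max (-a) (min a (uA t))) ^ 2 ∂mu01 := by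
    rw [← real_inner_self_eq_norm_sq, L2.inner_def]
    refine integral_congr_ae ?_
    filter_upwards [Lp.coeFn_sub uA (hpm.toLp _), hPc] with t ht hp
    rw [ht]
    simp only [RCLike.inner_apply, conj_trivial, Pi.sub_apply]
    rw [hp]
    ring
  have hpw : ∀ᵐ t ∂mu01, (uA t - max (-a) (min a (uA t))) ^ 2 ≤ (uA t - uB t) ^ 2 := by
    filter_upwards [huB'] with t ht
    exact clamp_le ht
  have heqI : ∫ t, (uA t - uB t) ^ 2 ∂mu01
      = ∫ t, (uA t - max (-a) (min a (uA t))) ^ 2 ∂mu01 := by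
    refine le_antisymm ?_ (integral_mono_ae hif2 hif1 hpw)
    rw [← hi1, ← hi2]
    exact hn2
  have hz : ∫ t, ((uA t - uB t) ^ 2 - (uA t - max (-a) (min a (uA t))) ^ 2) ∂mu01 = 0 := by
    rw [integral_sub hif1 hif2, heqI, sub_self]
  have hnn : 0 ≤ᶠ[ae mu01]
      fun t => (uA t - uB t) ^ 2 - (uA t - max (-a) (min a (uA t))) ^ 2 := by
    filter_upwards [hpw] with t ht
    simp only [Pi.zero_apply]
    linarith
  have hd0 := (integral_eq_zero_iff_of_nonneg_ae hnn (hif1.sub hif2)).mp hz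
  have hclamp : ∀ᵐ t ∂mu01, uB t = max (-a) (min a (uA t)) := by
    filter_upwards [hd0, huB'] with t h1 h2
    simp only [Pi.zero_apply] at h1
    exact clamp_eq h2 (by linarith)
  refine ⟨-d, c + d, ?_, hgfun, ?_, ?_⟩
  · by_contra hcon
    push_neg at hcon
    obtain ⟨hd, hc⟩ := hcon
    have hd0' : d = 0 := by linarith
    have hc0 : c = 0 := by linarith
    rw [hd0', hc0] at hcd
    simp only [zero_smul, add_zero, zero_add] at hcd
    have huAB : uA = uB := sub_eq_zero.mp hcd.symm
    have hmem : uA ∈ setA s0 sf v0 vf ∩ setB a := ⟨huA, by rw [huAB]; exact huB⟩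
    rw [hdisj] at hmem
    exact hmem
  · filter_upwards [hgfun, hclamp] with t h1 h2 hpos
    rw [h2]
    refine clamp_pos (le_of_lt ha) ?_
    rw [← h2]
    linarith
  · filter_upwards [hgfun, hclamp] with t h1 h2 hneg
    rw [h2]
    refine clamp_neg (le_of_lt ha) ?_
    rw [← h2]
    linarith
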